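/- In the noiseless case p = 0, let N be even and let p_1 > p_2 > ⋯ > p_N > 0 be a probability distribution with strictly decreasing probabilities. Then for a subset A ⊆ {1,…,N}, G_A(X) = G_opt(X) if and only if A is a C-partition, i.e., for every i ∈ {1,…,N/2} exactly one of 2i−1, 2i belongs to A. -/

import Mathlib

open Finset

noncomputable def guess (N : ℕ) (q : Fin N → ℝ) : ℝ :=
  Finset.univ.inf' ⟨1, Finset.mem_univ 1⟩
    (fun σ : Equiv.Perm (Fin N) => ∑ k : Fin N, ((k : ℝ) + 1) * q (σ k))

noncomputable def guessA (N : ℕ) (q : Fin N → ℝ) (p : ℝ) (A : Finset (Fin N)) : ℝ :=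
  ∑ y : Bool, Finset.univ.inf' ⟨1, Finset.mem_univ 1⟩
    (fun σ : Equiv.Perm (Fin N) => ∑ k : Fin N,
      ((k : ℝ) + 1) * q (σ k) * (if ((σ k ∈ A) ↔ (y = true)) then 1 - p else p))

noncomputable def guessOpt (N : ℕ) (q : Fin N → ℝ) (p : ℝ) : ℝ :=
  Finset.univ.inf' ⟨∅, Finset.mem_univ ∅⟩ (fun A : Finset (Fin N) => guessA N q p A)

def zigzag (N : ℕ) : Finset (Fin N) := Finset.univ.filter (fun k => (k : ℕ) % 2 = 0)

noncomputable def wt (N : ℕ) (q : Fin N → ℝ) (p : ℝ) (i j : Fin N) : ℝ :=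
  max 0 ((1 - p) * min (q i) (q j) - p * max (q i) (q j))

noncomputable def cut (N : ℕ) (q : Fin N → ℝ) (p : ℝ) (A : Finset (Fin N)) : ℝ :=
  ∑ i ∈ A, ∑ j ∈ Aᶜ, wt N q p i j

noncomputable def maxcut (N : ℕ) (q : Fin N → ℝ) (p : ℝ) : ℝ :=
  Finset.univ.sup' ⟨∅, Finset.mem_univ ∅⟩ (fun A : Finset (Fin N) => cut N q p A)

namespace Stmt6Aux

variable {N : ℕ}

/-- value of optimally guessing within B -/
noncomputable def val (q : Fin N → ℝ) (B : Finset (Fin N)) : ℝ :=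
  ∑ l : Fin B.card, ((l : ℝ) + 1) * q (B.orderEmbOfFin rfl l)

noncomputable def fB (q : Fin N → ℝ) (B : Finset (Fin N)) : Fin N → ℝ :=
  fun i => if i ∈ B then q i else 0

lemma card_split (B : Finset (Fin N)) : N = B.card + Bᶜ.card := by
  have := Finset.card_add_card_compl B
  simp only [Fintype.card_fin] at this
  omega

/-- permutation sorting B first (in increasing index order), then Bᶜ -/
noncomputable def perm (B : Finset (Fin N)) : Equiv.Perm (Fin N) :=
  (finCongr (card_split B)).trans <| finSumFinEquiv.symm.trans <|
    (Equiv.sumCongr (B.orderIsoOfFin rfl).toEquiv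
      ((Bᶜ.orderIsoOfFin rfl).toEquiv.trans
        (Equiv.subtypeEquivRight (fun x => by simp)))).trans <|
    Equiv.sumCompl (· ∈ B)

lemma perm_lt (B : Finset (Fin N)) (k : Fin N) (h : (k : ℕ) < B.card) :
    perm B k = B.orderEmbOfFin rfl ⟨k, h⟩ := by
  have h1 : finCongr (card_split B) k = Fin.castAdd Bᶜ.card ⟨(k : ℕ), h⟩ := by
    ext; simp
  simp only [perm, Equiv.trans_apply, h1, finSumFinEquiv_symm_apply_castAdd,
    Equiv.sumCongr_apply, Sum.map_inl, Equiv.sumCompl_apply_inl]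
  simp [Finset.coe_orderIsoOfFin_apply]

lemma perm_ge (B : Finset (Fin N)) (k : Fin N) (h : B.card ≤ (k : ℕ)) :
    perm B k ∉ B := by
  have hk2 : (k : ℕ) - B.card < Bᶜ.card := by
    have := k.2; have := card_split B; omega
  have h1 : finCongr (card_split B) k = Fin.natAdd B.card ⟨(k : ℕ) - B.card, hk2⟩ := by
    ext; simp; omega
  simp only [perm, Equiv.trans_apply, h1, finSumFinEquiv_symm_apply_natAdd,
    Equiv.sumCongr_apply, Sum.map_inr, Equiv.sumCompl_apply_inr, Equiv.trans_apply]
  have := (Bᶜ.orderIsoOfFin rfl ⟨(k : ℕ) - B.card, hk2⟩).2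
  simp only [Finset.mem_compl] at this
  simpa using this


variable {q : Fin N → ℝ}

lemma val_eq_permSum (q : Fin N → ℝ) (B : Finset (Fin N)) :
    val q B = ∑ k : Fin N, ((k : ℝ) + 1) * fB q B (perm B k) := by
  have hBN : B.card ≤ N := by simpa using B.card_le_univ
  rw [← Finset.sum_filter_add_sum_filter_not Finset.univ (fun k : Fin N => (k : ℕ) < B.card)]
  have h2 : ∑ k ∈ Finset.univ.filter (fun k : Fin N => ¬ (k : ℕ) < B.card),
      ((k : ℝ) + 1) * fB q B (perm B k) = 0 := by
    apply Finset.sum_eq_zero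
    intro k hk
    simp only [Finset.mem_filter, not_lt] at hk
    have := perm_ge B k hk.2
    simp [fB, this]
  rw [h2, add_zero, val]
  refine Finset.sum_bij' (i := fun (l : Fin B.card) _ => (⟨(l : ℕ), lt_of_lt_of_le l.2 hBN⟩ : Fin N))
    (j := fun (k : Fin N) hk => (⟨(k : ℕ), by simpa using hk⟩ : Fin B.card))
    ?_ ?_ ?_ ?_ ?_
  · intro l _; simp [l.2]
  · intro k hk; simp
  · intro l _; simp
  · intro k hk; simp
  · intro l _
    have hl : ((⟨(l : ℕ), lt_of_lt_of_le l.2 hBN⟩ : Fin N) : ℕ) < B.card := l.2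
    rw [perm_lt B _ hl]
    have hmem := B.orderEmbOfFin_mem rfl (⟨(⟨(l : ℕ), lt_of_lt_of_le l.2 hBN⟩ : Fin N), hl⟩ : Fin B.card)
    simp only [fB, if_pos hmem, Fin.eta]

lemma antitone_fB_perm (hpos : ∀ i, 0 < q i) (hanti : Antitone q) (B : Finset (Fin N)) :
    Antitone (fun k => fB q B (perm B k)) := by
  intro i j hij
  show fB q B (perm B j) ≤ fB q B (perm B i)
  by_cases hj : (j : ℕ) < B.card
  · have hi : (i : ℕ) < B.card := lt_of_le_of_lt hij hj
    rw [perm_lt B i hi, perm_lt B j hj]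
    have h1 := B.orderEmbOfFin_mem rfl ⟨(i:ℕ), hi⟩
    have h2 := B.orderEmbOfFin_mem rfl ⟨(j:ℕ), hj⟩
    simp only [fB, if_pos h1, if_pos h2]
    exact hanti ((B.orderEmbOfFin rfl).monotone (by exact hij))
  · push_neg at hj
    have hpj := perm_ge B j hj
    simp only [fB, if_neg hpj]
    by_cases hi : (i : ℕ) < B.card
    · rw [perm_lt B i hi]
      have h1 := B.orderEmbOfFin_mem rfl ⟨(i:ℕ), hi⟩
      simp only [if_pos h1]
      exact (hpos _).le
    · push_neg at hi
      simp [if_neg (perm_ge B i hi)]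

lemma val_le (hpos : ∀ i, 0 < q i) (hanti : Antitone q) (B : Finset (Fin N))
    (σ : Equiv.Perm (Fin N)) :
    val q B ≤ ∑ k : Fin N, ((k : ℝ) + 1) * fB q B (σ k) := by
  rw [val_eq_permSum]
  have hA : Antivary (fun k : Fin N => (k : ℝ) + 1) (fun k => fB q B (perm B k)) := by
    intro i j hgij
    by_contra hc
    push_neg at hc
    have hlt : ((i : ℕ) : ℝ) < ((j : ℕ) : ℝ) := by linarith
    have hij : i ≤ j := by
      have : (i : ℕ) < (j : ℕ) := by exact_mod_cast hlt
      exact le_of_lt this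
    exact absurd hgij (not_lt_of_ge (antitone_fB_perm hpos hanti B hij))
  have := hA.sum_smul_le_sum_smul_comp_perm (σ := (perm B)⁻¹ * σ)
  simp only [smul_eq_mul] at this
  convert this using 2 with k
  · rfl
  · simp [Equiv.Perm.mul_apply]

lemma inf_eq_val (hpos : ∀ i, 0 < q i) (hanti : Antitone q) (B : Finset (Fin N))
    (hne : (Finset.univ : Finset (Equiv.Perm (Fin N))).Nonempty) :
    Finset.univ.inf' hne
      (fun σ : Equiv.Perm (Fin N) => ∑ k : Fin N, ((k : ℝ) + 1) * fB q B (σ k)) = val q B := by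
  apply le_antisymm
  · exact (Finset.inf'_le _ (Finset.mem_univ (perm B))).trans
      (le_of_eq (val_eq_permSum q B).symm)
  · exact Finset.le_inf' _ _ fun σ _ => val_le hpos hanti B σ

lemma guessA_eq (hpos : ∀ i, 0 < q i) (hanti : Antitone q) (A : Finset (Fin N)) :
    guessA N q 0 A = val q A + val q Aᶜ := by
  rw [guessA, Fintype.sum_bool]
  congr 1
  · rw [← inf_eq_val hpos hanti A ⟨1, Finset.mem_univ 1⟩]
    congr 1; funext σ
    apply Finset.sum_congr rfl; intro k _
    by_cases h : σ k ∈ A <;> simp [fB, h] <;> ring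
  · rw [← inf_eq_val hpos hanti Aᶜ ⟨1, Finset.mem_univ 1⟩]
    congr 1; funext σ
    apply Finset.sum_congr rfl; intro k _
    by_cases h : σ k ∈ A <;> simp [fB, h] <;> ring

/-- number of j < i on the same side as i -/
def dd (A : Finset (Fin N)) (i : Fin N) : ℕ :=
  (Finset.univ.filter (fun j => j < i ∧ ((j ∈ A) ↔ (i ∈ A)))).card

lemma iso_eq_emb (B : Finset (Fin N)) (l : Fin B.card) :
    B.orderIsoOfFin rfl l = ⟨(B.orderEmbOfFin rfl l : Fin N), B.orderEmbOfFin_mem rfl l⟩ := by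
  ext; simp [Finset.coe_orderIsoOfFin_apply]

lemma rank_emb (B : Finset (Fin N)) (l : Fin B.card) :
    (B.filter (fun j => j < B.orderEmbOfFin rfl l)).card = (l : ℕ) := by
  rw [← Fin.card_Iio l]
  apply Finset.card_bij' (i := fun x hx => (B.orderIsoOfFin rfl).symm
      ⟨x, (Finset.mem_filter.1 hx).1⟩)
    (j := fun (j : Fin B.card) _ => (B.orderEmbOfFin rfl j : Fin N))
  case hi =>
    intro x hx
    rw [Finset.mem_filter] at hx
    rw [Finset.mem_Iio, ← OrderIso.lt_iff_lt (B.orderIsoOfFin rfl), OrderIso.apply_symm_apply,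
      iso_eq_emb, ← Subtype.coe_lt_coe]
    exact hx.2
  case hj =>
    intro j hj
    rw [Finset.mem_filter]
    exact ⟨B.orderEmbOfFin_mem rfl j, (B.orderEmbOfFin rfl).lt_iff_lt.2 (Finset.mem_Iio.1 hj)⟩
  case left_inv =>
    intro x hx
    rw [← Finset.coe_orderIsoOfFin_apply, OrderIso.apply_symm_apply]
  case right_inv =>
    intro j hj
    rw [OrderIso.symm_apply_eq, iso_eq_emb]

lemma val_eq_rank (q : Fin N → ℝ) (B : Finset (Fin N)) :
    val q B = ∑ i ∈ B, (((B.filter (fun j => j < i)).card : ℝ) + 1) * q i := by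
  rw [val]
  refine Finset.sum_bij' (i := fun (l : Fin B.card) _ => (B.orderEmbOfFin rfl l : Fin N))
    (j := fun i hi => (B.orderIsoOfFin rfl).symm ⟨i, hi⟩) ?_ ?_ ?_ ?_ ?_
  · intro l _; exact B.orderEmbOfFin_mem rfl l
  · intro i hi; exact Finset.mem_univ _
  · intro l _
    rw [OrderIso.symm_apply_eq, iso_eq_emb]
  · intro i hi
    show ((B.orderEmbOfFin rfl) ((B.orderIsoOfFin rfl).symm ⟨i, hi⟩) : Fin N) = i
    rw [← Finset.coe_orderIsoOfFin_apply, OrderIso.apply_symm_apply]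
  · intro l _
    rw [rank_emb]

lemma val_split (q : Fin N → ℝ) (A : Finset (Fin N)) :
    val q A + val q Aᶜ = ∑ i : Fin N, ((dd A i : ℝ) + 1) * q i := by
  rw [val_eq_rank, val_eq_rank, ← Finset.sum_add_sum_compl A (fun i => ((dd A i : ℝ) + 1) * q i)]
  congr 1
  · apply Finset.sum_congr rfl
    intro i hi
    have he : A.filter (fun j => j < i)
        = Finset.univ.filter (fun j => j < i ∧ ((j ∈ A) ↔ (i ∈ A))) := by
      ext j
      simp only [Finset.mem_filter, Finset.mem_univ, true_and, iff_true_intro hi, iff_true]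
      tauto
    rw [dd, ← he]
  · apply Finset.sum_congr rfl
    intro i hi
    have hi' : i ∉ A := Finset.mem_compl.1 hi
    have he : Aᶜ.filter (fun j => j < i)
        = Finset.univ.filter (fun j => j < i ∧ ((j ∈ A) ↔ (i ∈ A))) := by
      ext j
      simp only [Finset.mem_filter, Finset.mem_univ, true_and, Finset.mem_compl,
        iff_false_intro hi', iff_false]
      tauto
    rw [dd, ← he]


def cnt (b : ℕ → Bool) (t : ℕ) : ℕ := ((Finset.range t).filter (fun n => b n = true)).card

def dn (b : ℕ → Bool) (n : ℕ) : ℕ := ((Finset.range n).filter (fun m => b m = b n)).card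

def DD (b : ℕ → Bool) (t : ℕ) : ℕ := ∑ n ∈ Finset.range (t + 1), dn b n

lemma cnt_le (b : ℕ → Bool) (t : ℕ) : cnt b t ≤ t :=
  le_trans (Finset.card_filter_le _ _) (by simp)

lemma cnt_succ (b : ℕ → Bool) (t : ℕ) :
    cnt b (t + 1) = cnt b t + (if b t = true then 1 else 0) := by
  rw [cnt, Finset.range_add_one, Finset.filter_insert]
  split
  · rw [Finset.card_insert_of_notMem (by simp), cnt]
  · simp [cnt]

lemma dn_eq (b : ℕ → Bool) (n : ℕ) :
    dn b n = if b n = true then cnt b n else n - cnt b n := by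
  rw [dn]
  split
  · rename_i h
    rw [cnt]; congr 1; apply Finset.filter_congr; intro m _; simp [h]
  · rename_i h
    have hbn : b n = false := by revert h; cases b n <;> simp
    have hfc := Finset.card_filter_add_card_filter_not (s := Finset.range n)
      (p := fun m => b m = true)
    have he : (Finset.range n).filter (fun m => ¬ b m = true)
        = (Finset.range n).filter (fun m => b m = b n) := by
      apply Finset.filter_congr; intro m _
      cases hm : b m <;> simp [hbn]
    rw [← he]
    have := Finset.card_range n
    unfold cnt
    omega

lemma g2_succ (k : ℕ) : (k + 1) * k = k * (k - 1) + 2 * k := by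
  cases k with
  | zero => rfl
  | succ n => simp only [Nat.add_sub_cancel]; ring

lemma two_sum_dn (b : ℕ → Bool) (t : ℕ) :
    2 * ∑ n ∈ Finset.range t, dn b n
      = cnt b t * (cnt b t - 1) + (t - cnt b t) * (t - cnt b t - 1) := by
  induction t with
  | zero => simp [cnt]
  | succ t ih =>
    rw [Finset.sum_range_succ, cnt_succ, dn_eq]
    have hle := cnt_le b t
    cases hb : b t with
    | true =>
      simp only [hb, if_true]
      have h1 : (cnt b t + 1) * (cnt b t + 1 - 1) = cnt b t * (cnt b t - 1) + 2 * cnt b t := by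
        simpa using g2_succ (cnt b t)
      have h2 : t + 1 - (cnt b t + 1) = t - cnt b t := by omega
      rw [h2, h1]
      omega
    | false =>
      simp only [hb, Bool.false_eq_true, if_false]
      have h2 : t + 1 - cnt b t = (t - cnt b t) + 1 := by omega
      have h1 : ((t - cnt b t) + 1) * ((t - cnt b t) + 1 - 1)
          = (t - cnt b t) * (t - cnt b t - 1) + 2 * (t - cnt b t) := by
        simpa using g2_succ (t - cnt b t)
      simp only [add_zero]
      rw [h2, h1]
      omega

lemma two_DD (b : ℕ → Bool) (t : ℕ) :
    2 * DD b t = cnt b (t + 1) * (cnt b (t + 1) - 1)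
      + (t + 1 - cnt b (t + 1)) * (t + 1 - cnt b (t + 1) - 1) := two_sum_dn b (t + 1)

lemma cast_g2 (k : ℕ) : ((k * (k - 1) : ℕ) : ℤ) = (k : ℤ) * (k : ℤ) - k := by
  cases k with
  | zero => rfl
  | succ n => push_cast [Nat.add_sub_cancel]; ring

lemma int_key (a bb α : ℤ) (h2 : bb ≤ a + 1) (h3 : a ≤ bb) :
    (a * a - a) + (bb * bb - bb) ≤ (α * α - α) + ((a + bb - α) * (a + bb - α) - (a + bb - α)) ∧
    ((α * α - α) + ((a + bb - α) * (a + bb - α) - (a + bb - α))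
        = (a * a - a) + (bb * bb - bb) ↔ (α = a ∨ α = bb)) := by
  have key : (α * α - α) + ((a + bb - α) * (a + bb - α) - (a + bb - α))
      - ((a * a - a) + (bb * bb - bb)) = 2 * (α - a) * (α - bb) := by ring
  have hprod : 0 ≤ 2 * (α - a) * (α - bb) := by
    rcases le_or_gt α a with h4 | h4
    · nlinarith
    · have : bb ≤ α := by omega
      nlinarith
  constructor
  · linarith
  · constructor
    · intro he
      have : 2 * (α - a) * (α - bb) = 0 := by linarith
      rcases mul_eq_zero.1 this with h5 | h5
      · rcases mul_eq_zero.1 h5 with h6 | h6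
        · norm_num at h6
        · left; linarith
      · right; linarith
    · rintro (rfl | rfl) <;> ring

/-- the minimum of the pair-count functional, with equality characterization -/
lemma quad (m α : ℕ) (hα : α ≤ m) :
    (m / 2) * (m / 2 - 1) + ((m + 1) / 2) * ((m + 1) / 2 - 1)
      ≤ α * (α - 1) + (m - α) * (m - α - 1) ∧
    (α * (α - 1) + (m - α) * (m - α - 1)
        = (m / 2) * (m / 2 - 1) + ((m + 1) / 2) * ((m + 1) / 2 - 1)
      ↔ (α = m / 2 ∨ α = (m + 1) / 2)) := by
  have h2 : (((m + 1) / 2 : ℕ) : ℤ) ≤ ((m / 2 : ℕ) : ℤ) + 1 := by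
    exact_mod_cast (by omega : (m + 1) / 2 ≤ m / 2 + 1)
  have h3 : ((m / 2 : ℕ) : ℤ) ≤ (((m + 1) / 2 : ℕ) : ℤ) := by
    exact_mod_cast (by omega : m / 2 ≤ (m + 1) / 2)
  obtain ⟨hle, heq⟩ := int_key ((m / 2 : ℕ) : ℤ) (((m + 1) / 2 : ℕ) : ℤ) (α : ℤ) h2 h3
  have hsub : ((m / 2 : ℕ) : ℤ) + (((m + 1) / 2 : ℕ) : ℤ) - (α : ℤ) = ((m - α : ℕ) : ℤ) := by
    omega
  rw [hsub] at hle heq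
  have c1 : ((α * (α - 1) + (m - α) * (m - α - 1) : ℕ) : ℤ)
      = (α : ℤ) * (α : ℤ) - (α : ℤ)
        + (((m - α : ℕ) : ℤ) * ((m - α : ℕ) : ℤ) - ((m - α : ℕ) : ℤ)) := by
    rw [Nat.cast_add, cast_g2, cast_g2]
  have c2 : (((m / 2) * (m / 2 - 1) + ((m + 1) / 2) * ((m + 1) / 2 - 1) : ℕ) : ℤ)
      = ((m / 2 : ℕ) : ℤ) * ((m / 2 : ℕ) : ℤ) - ((m / 2 : ℕ) : ℤ)
        + ((((m + 1) / 2 : ℕ) : ℤ) * (((m + 1) / 2 : ℕ) : ℤ) - (((m + 1) / 2 : ℕ) : ℤ)) := by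
    rw [Nat.cast_add, cast_g2, cast_g2]
  constructor
  · have := hle
    rw [← c1, ← c2] at this
    exact_mod_cast this
  · constructor
    · intro he
      have he' : ((α * (α - 1) + (m - α) * (m - α - 1) : ℕ) : ℤ)
          = (((m / 2) * (m / 2 - 1) + ((m + 1) / 2) * ((m + 1) / 2 - 1) : ℕ) : ℤ) :=
        congrArg _ he
      rw [c1, c2] at he'
      rcases heq.1 he' with h | h
      · left; exact_mod_cast h
      · right; exact_mod_cast h
    · intro h
      have h' : (α : ℤ) = ((m / 2 : ℕ) : ℤ) ∨ (α : ℤ) = (((m + 1) / 2 : ℕ) : ℤ) := by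
        rcases h with h | h
        · left; exact_mod_cast h
        · right; exact_mod_cast h
      have := heq.2 h'
      rw [← c1, ← c2] at this
      exact_mod_cast this



lemma telescope (Q : ℕ → ℝ) (n NN : ℕ) (h : n ≤ NN) :
    ∑ t ∈ Finset.Ico n NN, (Q t - Q (t + 1)) = Q n - Q NN := by
  rw [Finset.sum_Ico_eq_sum_range]
  have h2 := Finset.sum_range_sub' (f := fun i => Q (n + i)) (n := NN - n)
  simpa [Nat.add_sub_cancel' h, add_assoc] using h2

lemma abel (NN : ℕ) (d Q : ℕ → ℝ) (hQ : Q NN = 0) :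
    ∑ n ∈ Finset.range NN, d n * Q n
      = ∑ t ∈ Finset.range NN, (∑ n ∈ Finset.range (t + 1), d n) * (Q t - Q (t + 1)) := by
  have h1 : ∀ n ∈ Finset.range NN,
      d n * Q n = ∑ t ∈ Finset.Ico n NN, d n * (Q t - Q (t + 1)) := by
    intro n hn
    rw [← Finset.mul_sum, telescope Q n NN (le_of_lt (Finset.mem_range.1 hn)), hQ, sub_zero]
  rw [Finset.sum_congr rfl h1, Finset.range_eq_Ico,
    Finset.sum_Ico_Ico_comm 0 NN (fun n t => d n * (Q t - Q (t + 1)))]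
  apply Finset.sum_congr rfl
  intro t _
  rw [Finset.sum_mul, ← Finset.range_eq_Ico]

lemma card_even (t : ℕ) :
    ((Finset.range t).filter (fun n => n % 2 = 0)).card = (t + 1) / 2 := by
  induction t with
  | zero => simp
  | succ t ih =>
    rw [Finset.range_add_one, Finset.filter_insert]
    split
    · rw [Finset.card_insert_of_notMem (by simp), ih]
      omega
    · rw [ih]
      omega


variable {N : ℕ} {q : Fin N → ℝ}

def bb (A : Finset (Fin N)) : ℕ → Bool :=
  fun n => if h : n < N then decide ((⟨n, h⟩ : Fin N) ∈ A) else false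

noncomputable def QQ (q : Fin N → ℝ) : ℕ → ℝ :=
  fun n => if h : n < N then q ⟨n, h⟩ else 0

lemma bb_eq (A : Finset (Fin N)) (n : ℕ) (h : n < N) :
    bb A n = decide ((⟨n, h⟩ : Fin N) ∈ A) := by simp [bb, h]

lemma bb_iff (A : Finset (Fin N)) (n : ℕ) (h : n < N) :
    bb A n = true ↔ (⟨n, h⟩ : Fin N) ∈ A := by simp [bb, h]

lemma dd_eq_dn (A : Finset (Fin N)) (i : Fin N) : dd A i = dn (bb A) (i : ℕ) := by
  rw [dd, dn, ← Finset.card_image_of_injective _ Fin.val_injective]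
  congr 1
  ext m
  simp only [Finset.mem_image, Finset.mem_filter, Finset.mem_univ, true_and, Finset.mem_range]
  constructor
  · rintro ⟨j, ⟨hlt, hiff⟩, rfl⟩
    refine ⟨Fin.lt_def.1 hlt, ?_⟩
    rw [bb_eq A (j : ℕ) j.2, bb_eq A (i : ℕ) i.2]
    simp only [Fin.eta]
    exact decide_eq_decide.2 hiff
  · rintro ⟨hlt, heq⟩
    have hmN : m < N := lt_trans hlt i.2
    refine ⟨⟨m, hmN⟩, ⟨Fin.lt_def.2 hlt, ?_⟩, rfl⟩
    rw [bb_eq A m hmN, bb_eq A (i : ℕ) i.2] at heq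
    simp only [Fin.eta] at heq
    exact decide_eq_decide.1 heq

lemma QQ_N : QQ q N = 0 := by simp [QQ]

lemma guessA_formula (hpos : ∀ i, 0 < q i) (hanti : Antitone q) (hsum : ∑ i, q i = 1)
    (A : Finset (Fin N)) :
    guessA N q 0 A
      = 1 + ∑ t ∈ Finset.range N, (DD (bb A) t : ℝ) * (QQ q t - QQ q (t + 1)) := by
  rw [guessA_eq hpos hanti A, val_split]
  have h1 : ∑ i : Fin N, ((dd A i : ℝ) + 1) * q i
      = ∑ i : Fin N, (dd A i : ℝ) * q i + ∑ i, q i := by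
    rw [← Finset.sum_add_distrib]
    apply Finset.sum_congr rfl; intros; ring
  rw [h1, hsum]
  have h2 : ∑ i : Fin N, (dd A i : ℝ) * q i
      = ∑ n ∈ Finset.range N, (dn (bb A) n : ℝ) * QQ q n := by
    rw [← Fin.sum_univ_eq_sum_range (fun n => (dn (bb A) n : ℝ) * QQ q n) N]
    apply Finset.sum_congr rfl
    intro i _
    rw [dd_eq_dn]
    congr 1
    simp [QQ, i.2]
  rw [h2, abel N _ _ QQ_N]
  have h3 : ∀ t ∈ Finset.range N,
      (∑ n ∈ Finset.range (t + 1), (dn (bb A) n : ℝ)) * (QQ q t - QQ q (t + 1))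
        = (DD (bb A) t : ℝ) * (QQ q t - QQ q (t + 1)) := by
    intro t _
    congr 1
    rw [DD]
    push_cast
    rfl
  rw [Finset.sum_congr rfl h3, add_comm]

lemma delta_pos (hpos : ∀ i, 0 < q i) (hstrict : ∀ i j : Fin N, i < j → q j < q i) :
    ∀ t, t < N → 0 < QQ q t - QQ q (t + 1) := by
  intro t ht
  by_cases h : t + 1 < N
  · have := hstrict ⟨t, ht⟩ ⟨t + 1, h⟩ (by simp [Fin.lt_def])
    simp only [QQ, dif_pos ht, dif_pos h]
    linarith
  · have hQ : QQ q (t + 1) = 0 := by simp [QQ, h]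
    rw [hQ, sub_zero]
    simp only [QQ, dif_pos ht]
    exact hpos _

lemma cnt_zig (t : ℕ) (ht : t ≤ N) : cnt (bb (zigzag N)) t = (t + 1) / 2 := by
  have hc : ∀ n ∈ Finset.range t, (bb (zigzag N) n = true) = (n % 2 = 0) := by
    intro n hn
    have hnN : n < N := lt_of_lt_of_le (Finset.mem_range.1 hn) ht
    rw [bb_iff _ n hnN]
    simp [zigzag]
  rw [cnt, Finset.filter_congr (fun n hn => by rw [hc n hn]), card_even]

lemma DD_compare (b : ℕ → Bool) (t : ℕ) (ht : t < N) :
    DD (bb (zigzag N)) t ≤ DD b t ∧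
    (DD b t = DD (bb (zigzag N)) t ↔
      cnt b (t + 1) = (t + 1) / 2 ∨ cnt b (t + 1) = (t + 2) / 2) := by
  have hz : cnt (bb (zigzag N)) (t + 1) = (t + 2) / 2 := by
    rw [cnt_zig (t + 1) ht]
  have h2z := two_DD (bb (zigzag N)) t
  rw [hz] at h2z
  have e1 : t + 1 - (t + 2) / 2 = (t + 1) / 2 := by omega
  rw [e1] at h2z
  have h2b := two_DD b t
  have hcb := cnt_le b (t + 1)
  obtain ⟨hq, hqe⟩ := quad (t + 1) (cnt b (t + 1)) hcb
  have e2 : (t + 1) + 1 = t + 2 := by omega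
  rw [e2] at hq hqe
  constructor
  · have h2 : 2 * DD (bb (zigzag N)) t ≤ 2 * DD b t := by
      rw [h2z, h2b]
      linarith
    omega
  · constructor
    · intro h
      apply hqe.1
      have : 2 * DD b t = 2 * DD (bb (zigzag N)) t := by omega
      rw [h2z, h2b] at this
      linarith
    · intro h
      have := hqe.2 h
      have h2 : 2 * DD b t = 2 * DD (bb (zigzag N)) t := by
        rw [h2z, h2b]
        linarith
      omega

end Stmt6Aux

open Stmt6Aux in
theorem stmt_6 (N : ℕ) (hN : 1 ≤ N) (hNe : Even N) (q : Fin N → ℝ)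
    (hpos : ∀ i, 0 < q i) (hsum : ∑ i, q i = 1)
    (hstrict : ∀ i j : Fin N, i < j → q j < q i)
    (A : Finset (Fin N)) :
    guessA N q 0 A = guessOpt N q 0 ↔
      ∀ i : ℕ, ∀ h1 : 2 * i < N, ∀ h2 : 2 * i + 1 < N,
        ((⟨2 * i, h1⟩ : Fin N) ∈ A ↔ (⟨2 * i + 1, h2⟩ : Fin N) ∉ A) := by
  classical
  have hanti : Antitone q := by
    intro i j hij
    rcases lt_or_eq_of_le hij with h | h
    · exact (hstrict i j h).le
    · rw [h]
  have hform : ∀ B : Finset (Fin N), guessA N q 0 B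
      = 1 + ∑ t ∈ Finset.range N, (DD (bb B) t : ℝ) * (QQ q t - QQ q (t + 1)) :=
    fun B => guessA_formula hpos hanti hsum B
  have hdelta := delta_pos hpos hstrict
  have hge : ∀ B : Finset (Fin N), guessA N q 0 (zigzag N) ≤ guessA N q 0 B := by
    intro B
    rw [hform, hform]
    apply add_le_add_right
    apply Finset.sum_le_sum
    intro t ht
    have h1 := (DD_compare (bb B) t (Finset.mem_range.1 ht)).1
    have h2 := hdelta t (Finset.mem_range.1 ht)
    have h3 : ((DD (bb (zigzag N)) t : ℝ)) ≤ (DD (bb B) t : ℝ) := by exact_mod_cast h1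
    exact mul_le_mul_of_nonneg_right h3 h2.le
  have hopt : guessOpt N q 0 = guessA N q 0 (zigzag N) := by
    apply le_antisymm
    · exact Finset.inf'_le _ (Finset.mem_univ _)
    · exact Finset.le_inf' _ _ fun B _ => hge B
  rw [hopt]
  constructor
  · -- equality implies pairs
    intro heq
    have hsum0 : ∑ t ∈ Finset.range N,
        ((DD (bb A) t : ℝ) - (DD (bb (zigzag N)) t : ℝ)) * (QQ q t - QQ q (t + 1)) = 0 := by
      rw [hform A, hform (zigzag N)] at heq
      simp only [sub_mul]
      rw [Finset.sum_sub_distrib]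
      linarith
    have hnonneg : ∀ t ∈ Finset.range N,
        0 ≤ ((DD (bb A) t : ℝ) - (DD (bb (zigzag N)) t : ℝ)) * (QQ q t - QQ q (t + 1)) := by
      intro t ht
      have h1 := (DD_compare (bb A) t (Finset.mem_range.1 ht)).1
      have h3 : ((DD (bb (zigzag N)) t : ℝ)) ≤ (DD (bb A) t : ℝ) := by exact_mod_cast h1
      exact mul_nonneg (by linarith) (hdelta t (Finset.mem_range.1 ht)).le
    have hterm := (Finset.sum_eq_zero_iff_of_nonneg hnonneg).1 hsum0
    have hDD : ∀ t, t < N → DD (bb A) t = DD (bb (zigzag N)) t := by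
      intro t ht
      have h0 := hterm t (Finset.mem_range.2 ht)
      rcases mul_eq_zero.1 h0 with h | h
      · have : (DD (bb A) t : ℝ) = (DD (bb (zigzag N)) t : ℝ) := by linarith
        exact_mod_cast this
      · exact absurd h (ne_of_gt (hdelta t ht))
    have hbal : ∀ t, t < N →
        cnt (bb A) (t + 1) = (t + 1) / 2 ∨ cnt (bb A) (t + 1) = (t + 2) / 2 :=
      fun t ht => (DD_compare (bb A) t ht).2.1 (hDD t ht)
    intro i h1 h2
    have hc0 : cnt (bb A) (2 * i) = i := by
      rcases Nat.eq_zero_or_pos i with rfl | hi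
      · simp [cnt]
      · have ht : 2 * i - 1 < N := by omega
        have hb := hbal (2 * i - 1) ht
        have e : 2 * i - 1 + 1 = 2 * i := by omega
        rw [e] at hb
        omega
    have hc2 : cnt (bb A) (2 * i + 2) = i + 1 := by
      have hb := hbal (2 * i + 1) h2
      have e : 2 * i + 1 + 1 = 2 * i + 2 := by omega
      rw [e] at hb
      omega
    have hs1 := cnt_succ (bb A) (2 * i)
    have hs2 := cnt_succ (bb A) (2 * i + 1)
    have e : 2 * i + 1 + 1 = 2 * i + 2 := by omega
    rw [e, hs1, hc0, hc2] at hs2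
    have m1 := bb_iff A (2 * i) h1
    have m2 := bb_iff A (2 * i + 1) h2
    cases hb1 : bb A (2 * i) <;> cases hb2 : bb A (2 * i + 1) <;>
      rw [hb1, hb2] at hs2 <;> rw [hb1] at m1 <;> rw [hb2] at m2 <;>
      norm_num at m1 m2 hs2 <;> tauto
  · -- pairs imply equality
    intro hpair
    have hcnt2 : ∀ i, 2 * i ≤ N → cnt (bb A) (2 * i) = i := by
      intro i
      induction i with
      | zero => intro _; simp [cnt]
      | succ i ih =>
        intro hle
        have h1 : 2 * i < N := by omega
        have h2 : 2 * i + 1 < N := by omega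
        have hp := hpair i h1 h2
        have hs1 := cnt_succ (bb A) (2 * i)
        have hs2 := cnt_succ (bb A) (2 * i + 1)
        have e : 2 * i + 1 + 1 = 2 * (i + 1) := by omega
        rw [e, hs1, ih (by omega)] at hs2
        have m1 := bb_iff A (2 * i) h1
        have m2 := bb_iff A (2 * i + 1) h2
        cases hb1 : bb A (2 * i) <;> cases hb2 : bb A (2 * i + 1) <;>
          rw [hb1, hb2] at hs2 <;> rw [hb1] at m1 <;> rw [hb2] at m2 <;>
          norm_num at hs2 m1 m2 <;> first | omega | tauto
    have hbal : ∀ t, t < N →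
        cnt (bb A) (t + 1) = (t + 1) / 2 ∨ cnt (bb A) (t + 1) = (t + 2) / 2 := by
      intro t ht
      rcases Nat.even_or_odd t with ⟨i, hi⟩ | ⟨i, hi⟩
      · -- t = 2i
        have hti : t = 2 * i := by omega
        subst hti
        have hc := hcnt2 i (by omega)
        have hs := cnt_succ (bb A) (2 * i)
        rw [hc] at hs
        cases hb : bb A (2 * i) <;> rw [hb] at hs <;> norm_num at hs <;> omega
      · -- t = 2i+1
        have hti : t = 2 * i + 1 := by omega
        subst hti
        have hc := hcnt2 (i + 1) (by omega)
        have e : 2 * (i + 1) = 2 * i + 1 + 1 := by omega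
        rw [e] at hc
        omega
    rw [hform A, hform (zigzag N)]
    congr 1
    apply Finset.sum_congr rfl
    intro t ht
    have ht' := Finset.mem_range.1 ht
    have hDDe : DD (bb A) t = DD (bb (zigzag N)) t :=
      (DD_compare (bb A) t ht').2.2 (hbal t ht')
    rw [hDDe]
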